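/- Weak duality for polyhedral distance: for polyhedra V = {x : C x ≤ d} and O = {x : A x ≤ b} in ℝ², and any λ ≥ 0, μ ≥ 0 with Cᵀ λ + Aᵀ μ = 0 and Aᵀ μ ≠ 0, the quantity (−λᵀ d − μᵀ b)/‖Aᵀ μ‖ is a lower bound on the signed distance sd(V, O). -/

import Mathlib

open Matrix RealInnerProductSpace

def toE (v : Fin 2 → ℝ) : EuclideanSpace ℝ (Fin 2) := WithLp.toLp 2 v

noncomputable def distSet (V O : Set (EuclideanSpace ℝ (Fin 2))) : ℝ :=
  sInf {r : ℝ | ∃ z : EuclideanSpace ℝ (Fin 2), r = ‖z‖ ∧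
    (((fun v => v + z) '' V) ∩ O).Nonempty}

noncomputable def penSet (V O : Set (EuclideanSpace ℝ (Fin 2))) : ℝ :=
  sInf {r : ℝ | ∃ z : EuclideanSpace ℝ (Fin 2), r = ‖z‖ ∧
    ¬(((fun v => v + z) '' V) ∩ O).Nonempty}

noncomputable def sd (V O : Set (EuclideanSpace ℝ (Fin 2))) : ℝ :=
  distSet V O - penSet V O

/-- weak duality: for polyhedra `V = {x : C x ≤ d}` and `O = {x : A x ≤ b}`
and any `λ ≥ 0`, `μ ≥ 0` with `Cᵀλ + Aᵀμ = 0` and `Aᵀμ ≠ 0`, the quantity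
`(−λᵀd − μᵀb)/‖Aᵀμ‖` is a lower bound on the signed distance. -/
theorem weak_duality_polyhedral_sd {L Lm : ℕ}
    (C : Matrix (Fin L) (Fin 2) ℝ) (d : Fin L → ℝ)
    (A : Matrix (Fin Lm) (Fin 2) ℝ) (b : Fin Lm → ℝ)
    (V O : Set (EuclideanSpace ℝ (Fin 2)))
    (hV : V = {x : EuclideanSpace ℝ (Fin 2) | ∀ i, C.mulVec x i ≤ d i})
    (hO : O = {x : EuclideanSpace ℝ (Fin 2) | ∀ i, A.mulVec x i ≤ b i})
    (hVne : V.Nonempty) (hOne : O.Nonempty)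
    (hVc : IsCompact V) (hOc : IsCompact O)
    (lam : Fin L → ℝ) (mu : Fin Lm → ℝ)
    (hlam : 0 ≤ lam) (hmu : 0 ≤ mu)
    (hcons : Cᵀ.mulVec lam + Aᵀ.mulVec mu = 0)
    (hAmu : Aᵀ.mulVec mu ≠ 0) :
    (-(lam ⬝ᵥ d) - mu ⬝ᵥ b) / ‖toE (Aᵀ.mulVec mu)‖ ≤ sd V O := by
  set g : Fin 2 → ℝ := Aᵀ.mulVec mu with hgdef
  have hCl : Cᵀ.mulVec lam = -g := by
    have := hcons
    rw [add_eq_zero_iff_eq_neg] at this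
    exact this
  have hgne : toE g ≠ 0 := fun h0 => hAmu (by simpa [toE] using h0)
  have hgpos : (0:ℝ) < ‖toE g‖ := norm_pos_iff.mpr hgne
  set nd : ℝ := ‖toE g‖ with hnd
  set D : ℝ := (-(lam ⬝ᵥ d) - mu ⬝ᵥ b) / nd with hD
  have hDn : D * nd = -(lam ⬝ᵥ d) - mu ⬝ᵥ b := div_mul_cancel₀ _ (ne_of_gt hgpos)
  have inner_eq : ∀ z : EuclideanSpace ℝ (Fin 2),
      ⟪toE g, z⟫ = g ⬝ᵥ (fun i => z i) := by
    intro z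
    simp [PiLp.inner_apply, toE, dotProduct, RCLike.inner_apply, conj_trivial]; ring
  -- Key inequality: any intersecting translation z satisfies g⬝z ≤ λᵀd + μᵀb
  have key : ∀ z : EuclideanSpace ℝ (Fin 2),
      (((fun v => v + z) '' V) ∩ O).Nonempty →
      g ⬝ᵥ (fun i => z i) ≤ lam ⬝ᵥ d + mu ⬝ᵥ b := by
    intro z hz
    obtain ⟨y, hyV, hyO⟩ := hz
    obtain ⟨x, hxV, rfl⟩ := hyV
    rw [hV] at hxV
    rw [hO] at hyO
    have h1 : lam ⬝ᵥ C.mulVec x ≤ lam ⬝ᵥ d :=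
      Finset.sum_le_sum (fun i _ => mul_le_mul_of_nonneg_left (hxV i) (hlam i))
    have h2 : mu ⬝ᵥ A.mulVec (x + z) ≤ mu ⬝ᵥ b :=
      Finset.sum_le_sum (fun i _ => mul_le_mul_of_nonneg_left (hyO i) (hmu i))
    have e1 : lam ⬝ᵥ C.mulVec x = (-g) ⬝ᵥ (fun i => x i) := by
      rw [Matrix.dotProduct_mulVec, ← Matrix.mulVec_transpose, hCl]
    have e2 : mu ⬝ᵥ A.mulVec (x + z) = g ⬝ᵥ (fun i => (x + z) i) := by
      rw [Matrix.dotProduct_mulVec, ← Matrix.mulVec_transpose, hgdef]; simp; ring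
    have e3 : g ⬝ᵥ (fun i => (x + z) i) =
        g ⬝ᵥ (fun i => x i) + g ⬝ᵥ (fun i => z i) := by
      simp [dotProduct, mul_add, Finset.sum_add_distrib]
    have e4 : (-g) ⬝ᵥ (fun i => x i) = -(g ⬝ᵥ (fun i => x i)) := by
      simp [dotProduct]
    rw [e1, e4] at h1
    rw [e2, e3] at h2
    linarith
  -- Cauchy-Schwarz lower bound
  have cs : ∀ z : EuclideanSpace ℝ (Fin 2),
      -(nd * ‖z‖) ≤ g ⬝ᵥ (fun i => z i) := by
    intro z
    rw [← inner_eq]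
    exact neg_le_of_abs_le (abs_real_inner_le_norm _ _)
  -- each intersecting z has ‖z‖ ≥ D
  have hnormD : ∀ z : EuclideanSpace ℝ (Fin 2),
      (((fun v => v + z) '' V) ∩ O).Nonempty → D ≤ ‖z‖ := by
    intro z hz
    have h1 := key z hz
    have h2 := cs z
    rw [hD, div_le_iff₀ hgpos]
    nlinarith
  -- dist set nonempty
  obtain ⟨v0, hv0⟩ := hVne
  obtain ⟨o0, ho0⟩ := hOne
  have hdne : ∃ r, r ∈ {r : ℝ | ∃ z : EuclideanSpace ℝ (Fin 2), r = ‖z‖ ∧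
      (((fun v => v + z) '' V) ∩ O).Nonempty} := by
    refine ⟨‖o0 - v0‖, o0 - v0, rfl, o0, ⟨v0, hv0, by show v0 + (o0 - v0) = o0; rw [add_comm, sub_add_cancel]⟩, ho0⟩
  -- distSet ≥ max D 0
  have hdist : max D 0 ≤ distSet V O := by
    apply le_csInf hdne
    rintro r ⟨z, rfl, hz⟩
    exact max_le (hnormD z hz) (norm_nonneg z)
  -- penSet ≤ max D 0 - D
  have hpenBdd : BddBelow {r : ℝ | ∃ z : EuclideanSpace ℝ (Fin 2), r = ‖z‖ ∧
      ¬(((fun v => v + z) '' V) ∩ O).Nonempty} := by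
    refine ⟨0, ?_⟩
    rintro r ⟨z, rfl, -⟩
    exact norm_nonneg z
  have hpen : penSet V O ≤ max D 0 - D := by
    rcases le_or_gt D 0 with hD0 | hD0
    · -- D ≤ 0 : penSet ≤ -D
      rw [max_eq_right hD0, zero_sub]
      apply le_of_forall_pos_le_add
      intro ε hε
      set c : ℝ := (-D + ε) / nd with hc
      have hcpos : 0 < c := div_pos (by linarith) hgpos
      have hcnd : c * nd = -D + ε := div_mul_cancel₀ _ (ne_of_gt hgpos)
      have hsq : g ⬝ᵥ g = nd * nd := by
        have : ‖toE g‖ ^ 2 = g ⬝ᵥ g := by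
          rw [← real_inner_self_eq_norm_sq, inner_eq]; rfl
        rw [← this, hnd]; ring
      have hdot : g ⬝ᵥ (fun i => (c • toE g) i) = c * (nd * nd) := by
        rw [← hsq]
        simp [dotProduct, toE, Finset.mul_sum]; ring_nf
      have hnotint : ¬(((fun v => v + (c • toE g)) '' V) ∩ O).Nonempty := by
        intro hint
        have h1 := key _ hint
        rw [hdot] at h1
        nlinarith
      have hmem : ‖c • toE g‖ ∈ {r : ℝ | ∃ z : EuclideanSpace ℝ (Fin 2), r = ‖z‖ ∧
          ¬(((fun v => v + z) '' V) ∩ O).Nonempty} := ⟨c • toE g, rfl, hnotint⟩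
      have h2 : penSet V O ≤ ‖c • toE g‖ := csInf_le hpenBdd hmem
      have h3 : ‖c • toE g‖ = c * nd := by
        rw [norm_smul, Real.norm_eq_abs, abs_of_nonneg (le_of_lt hcpos), hnd]
      rw [h3, hcnd] at h2
      exact h2
    · -- D > 0 : penSet ≤ 0
      rw [max_eq_left (le_of_lt hD0)]
      have hnotint : ¬(((fun v => v + (0 : EuclideanSpace ℝ (Fin 2))) '' V) ∩ O).Nonempty := by
        intro hint
        have h1 := key _ hint
        have h2 : g ⬝ᵥ (fun i => (0 : EuclideanSpace ℝ (Fin 2)) i) = 0 := by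
          simp [dotProduct]
        rw [h2] at h1
        nlinarith
      have hmem : (0:ℝ) ∈ {r : ℝ | ∃ z : EuclideanSpace ℝ (Fin 2), r = ‖z‖ ∧
          ¬(((fun v => v + z) '' V) ∩ O).Nonempty} := ⟨0, by simp, hnotint⟩
      have h2 : penSet V O ≤ 0 := csInf_le hpenBdd hmem
      linarith
  show D ≤ distSet V O - penSet V O
  have hmax : D ≤ max D 0 := le_max_left _ _
  linarith
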